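/- Let A be the 2×2 real matrix with rows (−1, 1) and (1, −1). Let l : [0, ∞) → ℝ be continuous with l(t) ≥ l₀ for all t ≥ 0, where l₀ > 0. Let b : [0, ∞) → ℝ² be differentiable with b′(t) = l(t)·(A b(t)) and with b(0) having nonnegative components summing to 1. Fix t₀ > 0 and let Λ : [t₀, ∞) → ℝ² be differentiable with Λ′(t) = (b(t) − Λ(t))/t for all t ≥ t₀. Then both b(t) and Λ(t) converge to (1/2, 1/2) as t → ∞. -/

import Mathlib

lemma slope_tendsto_zero (a : ℝ) (f f' : ℝ → ℝ)
    (hf : ∀ t ≥ a, HasDerivWithinAt f (f' t) (Set.Ici a) t)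
    (h0 : Filter.Tendsto f' Filter.atTop (nhds 0)) :
    Filter.Tendsto (fun t => f t / t) Filter.atTop (nhds 0) := by
  rw [Metric.tendsto_atTop]
  intro ε hε
  obtain ⟨T₁, hT₁⟩ := (Metric.tendsto_atTop.mp h0) (ε/4) (by positivity)
  set T := max T₁ (max a 1) with hTdef
  have hTa : a ≤ T := le_trans (le_max_left a 1) (le_max_right _ _)
  have hT1 : (1:ℝ) ≤ T := le_trans (le_max_right a 1) (le_max_right _ _)
  have hbound : ∀ t ≥ T, |f t| ≤ |f T| + ε/4 * t := by
    intro t ht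
    have key := Convex.norm_image_sub_le_of_norm_hasDerivWithin_le
      (f := f) (f' := f') (s := Set.Ici T) (C := ε/4) (x := T) (y := t)
      (fun x hx => (hf x (le_trans hTa hx)).mono (Set.Ici_subset_Ici.mpr hTa))
      (fun x hx => le_of_lt (by
        have := hT₁ x (le_trans (le_max_left _ _) hx)
        simpa [Real.dist_eq] using this))
      (convex_Ici T) Set.self_mem_Ici ht
    have h1 : |f t| ≤ |f t - f T| + |f T| := by
      have := abs_add_le (f t - f T) (f T); simpa using this
    have h2 : |t - T| ≤ t := by
      rw [abs_of_nonneg (by linarith)]; linarith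
    have key' : |f t - f T| ≤ ε/4 * |t - T| := by simpa [Real.norm_eq_abs] using key
    nlinarith [abs_nonneg (f t - f T)]
  refine ⟨max T (4 * |f T| / ε + 1), fun t ht => ?_⟩
  have htT : T ≤ t := le_trans (le_max_left _ _) ht
  have ht2 : 4 * |f T| / ε + 1 ≤ t := le_trans (le_max_right _ _) ht
  have htpos : (0:ℝ) < t := by
    have : (0:ℝ) < 4 * |f T| / ε + 1 := by positivity
    linarith
  have h3 : |f T| < ε/4 * t := by
    have : ε/4 * (4 * |f T| / ε + 1) = |f T| + ε/4 := by field_simp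
    nlinarith
  have h4 := hbound t htT
  rw [Real.dist_eq, sub_zero, abs_div, abs_of_pos htpos, div_lt_iff₀ htpos]
  nlinarith

theorem stmt_5 (l₀ : ℝ) (hl₀ : 0 < l₀) (l : ℝ → ℝ)
    (hl_cont : ContinuousOn l (Set.Ici 0)) (hl : ∀ t ≥ (0 : ℝ), l₀ ≤ l t)
    (b : ℝ → Fin 2 → ℝ)
    (hb : ∀ t ≥ (0 : ℝ), HasDerivWithinAt b
      (l t • (!![(-1 : ℝ), 1; 1, -1]).mulVec (b t)) (Set.Ici 0) t)
    (hb0_nonneg : ∀ i, 0 ≤ b 0 i) (hb0_sum : b 0 0 + b 0 1 = 1)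
    (t₀ : ℝ) (ht₀ : 0 < t₀) (Λ : ℝ → Fin 2 → ℝ)
    (hΛ : ∀ t ≥ t₀, HasDerivWithinAt Λ ((1 / t) • (b t - Λ t)) (Set.Ici t₀) t) :
    Filter.Tendsto b Filter.atTop (nhds ![(1:ℝ)/2, 1/2]) ∧
    Filter.Tendsto Λ Filter.atTop (nhds ![(1:ℝ)/2, 1/2]) := by
  -- component derivatives of b
  have hcomp : ∀ (i : Fin 2), ∀ t ≥ (0:ℝ), HasDerivWithinAt (fun t => b t i)
      ((l t • (!![(-1 : ℝ), 1; 1, -1]).mulVec (b t)) i) (Set.Ici 0) t := fun i t ht =>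
    (ContinuousLinearMap.proj (R := ℝ) (φ := fun _ : Fin 2 => ℝ) i).hasFDerivAt.comp_hasDerivWithinAt
      t (hb t ht)
  have hval0 : ∀ t, (l t • (!![(-1 : ℝ), 1; 1, -1]).mulVec (b t)) 0 = l t * (b t 1 - b t 0) := by
    intro t
    simp [Matrix.mulVec, dotProduct, Fin.sum_univ_two]
    ring_nf
    tauto
  have hval1 : ∀ t, (l t • (!![(-1 : ℝ), 1; 1, -1]).mulVec (b t)) 1 = l t * (b t 0 - b t 1) := by
    intro t
    simp [Matrix.mulVec, dotProduct, Fin.sum_univ_two]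
    ring_nf
    tauto
  -- the sum is constant equal to 1
  have hsum : ∀ t ≥ (0:ℝ), HasDerivWithinAt (fun t => b t 0 + b t 1) 0 (Set.Ici 0) t := by
    intro t ht
    have h := (hcomp 0 t ht).add (hcomp 1 t ht)
    rw [hval0, hval1] at h
    convert h using 1
    · rfl
    · rfl
    · rfl
    ring
  have hconst : ∀ t ≥ (0:ℝ), b t 0 + b t 1 = 1 := by
    intro t ht
    have hc : ContinuousOn (fun t => b t 0 + b t 1) (Set.Icc 0 t) := fun x hx =>
      ((hsum x hx.1).continuousWithinAt).mono (fun y hy => hy.1)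
    have := constant_of_has_deriv_right_zero hc
      (fun x hx => (hsum x hx.1).mono (Set.Ici_subset_Ici.mpr hx.1)) t ⟨ht, le_refl t⟩
    rw [this]
    exact hb0_sum
  -- the difference d
  set d : ℝ → ℝ := fun t => b t 0 - b t 1 with hddef
  have hd : ∀ t ≥ (0:ℝ), HasDerivWithinAt d (-2 * l t * d t) (Set.Ici 0) t := by
    intro t ht
    have h := (hcomp 0 t ht).sub (hcomp 1 t ht)
    rw [hval0, hval1] at h
    convert h using 1
    · rfl
    · rfl
    · rfl
    simp only [hddef]
    ring
  -- Lyapunov function v = d^2 * exp (4 l₀ t)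
  set v : ℝ → ℝ := fun t => d t ^ 2 * Real.exp (4 * l₀ * t) with hvdef
  have hv : ∀ t ≥ (0:ℝ), HasDerivWithinAt v
      ((2 * d t ^ 1 * (-2 * l t * d t)) * Real.exp (4 * l₀ * t)
        + d t ^ 2 * (Real.exp (4 * l₀ * t) * (4 * l₀))) (Set.Ici 0) t := by
    intro t ht
    have he : HasDerivAt (fun s => Real.exp (4 * l₀ * s)) (Real.exp (4 * l₀ * t) * (4 * l₀)) t := by
      have h1 : HasDerivAt (fun s : ℝ => 4 * l₀ * s) (4 * l₀) t := by
        simpa using (hasDerivAt_id t).const_mul (4 * l₀)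
      exact (Real.hasDerivAt_exp (4 * l₀ * t)).comp t h1
    exact ((hd t ht).pow 2).mul (he.hasDerivWithinAt)
  have hanti : AntitoneOn v (Set.Ici 0) := by
    apply antitoneOn_of_deriv_nonpos (convex_Ici 0)
    · exact fun x hx => (hv x hx).continuousWithinAt
    · intro x hx
      rw [interior_Ici] at hx
      exact ((hv x (le_of_lt hx)).hasDerivAt (Ici_mem_nhds hx)).differentiableAt.differentiableWithinAt
    · intro x hx
      rw [interior_Ici] at hx
      rw [((hv x (le_of_lt hx)).hasDerivAt (Ici_mem_nhds hx)).deriv]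
      have h1 : l₀ ≤ l x := hl x (le_of_lt hx)
      have h2 : (0:ℝ) < Real.exp (4 * l₀ * x) := Real.exp_pos _
      nlinarith [mul_nonneg h2.le (mul_nonneg (sub_nonneg.mpr h1) (sq_nonneg (d x)))]
  -- d^2 decays to zero
  have hd2le : ∀ t ≥ (0:ℝ), d t ^ 2 ≤ d 0 ^ 2 * Real.exp (-(4 * l₀ * t)) := by
    intro t ht
    have hvle := hanti Set.self_mem_Ici ht ht
    simp only [hvdef, mul_zero, Real.exp_zero, mul_one] at hvle
    have h2 : (0:ℝ) < Real.exp (4 * l₀ * t) := Real.exp_pos _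
    rw [Real.exp_neg, mul_comm (d 0 ^ 2), inv_mul_eq_div, le_div_iff₀ h2]
    exact hvle
  have hd2 : Filter.Tendsto (fun t => d t ^ 2) Filter.atTop (nhds 0) := by
    have hlin : Filter.Tendsto (fun t : ℝ => 4 * l₀ * t) Filter.atTop Filter.atTop :=
      Filter.Tendsto.const_mul_atTop (by positivity) Filter.tendsto_id
    have hexp : Filter.Tendsto (fun t => Real.exp (-(4 * l₀ * t))) Filter.atTop (nhds 0) :=
      Real.tendsto_exp_atBot.comp (Filter.tendsto_neg_atTop_atBot.comp hlin)
    have hup := hexp.const_mul (d 0 ^ 2)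
    rw [mul_zero] at hup
    apply tendsto_of_tendsto_of_tendsto_of_le_of_le' tendsto_const_nhds hup
    · exact Filter.Eventually.of_forall (fun t => sq_nonneg _)
    · filter_upwards [Filter.eventually_ge_atTop (0:ℝ)] with t ht
      exact hd2le t ht
  have hdtend : Filter.Tendsto d Filter.atTop (nhds 0) := by
    have habs : Filter.Tendsto (fun t => |d t|) Filter.atTop (nhds 0) := by
      have := (Real.continuous_sqrt.tendsto 0).comp hd2
      simp only [Function.comp_def, Real.sqrt_sq_eq_abs, Real.sqrt_zero] at this
      exact this
    have hneg : Filter.Tendsto (fun t => -|d t|) Filter.atTop (nhds 0) := by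
      simpa using habs.neg
    exact tendsto_of_tendsto_of_tendsto_of_le_of_le hneg habs
      (fun t => neg_abs_le _) (fun t => le_abs_self _)
  -- convergence of the components of b
  have hb0t : Filter.Tendsto (fun t => b t 0) Filter.atTop (nhds (1/2)) := by
    have : Filter.Tendsto (fun t => (1 + d t) / 2) Filter.atTop (nhds (1/2)) := by
      have := ((tendsto_const_nhds (x := (1:ℝ))).add hdtend).div_const (2:ℝ)
      simpa using this
    apply this.congr'
    filter_upwards [Filter.eventually_ge_atTop (0:ℝ)] with t ht
    have := hconst t ht
    simp only [hddef]
    linarith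
  have hb1t : Filter.Tendsto (fun t => b t 1) Filter.atTop (nhds (1/2)) := by
    have : Filter.Tendsto (fun t => (1 - d t) / 2) Filter.atTop (nhds (1/2)) := by
      have := ((tendsto_const_nhds (x := (1:ℝ))).sub hdtend).div_const (2:ℝ)
      simpa using this
    apply this.congr'
    filter_upwards [Filter.eventually_ge_atTop (0:ℝ)] with t ht
    have := hconst t ht
    simp only [hddef]
    linarith
  have hbtend : Filter.Tendsto b Filter.atTop (nhds ![(1:ℝ)/2, 1/2]) := by
    rw [tendsto_pi_nhds]
    intro i
    fin_cases i
    · simpa using hb0t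
    · simpa using hb1t
  refine ⟨hbtend, ?_⟩
  -- Λ part
  have hΛtend : ∀ (i : Fin 2), Filter.Tendsto (fun t => b t i) Filter.atTop (nhds (1/2)) →
      Filter.Tendsto (fun t => Λ t i) Filter.atTop (nhds (1/2)) := by
    intro i hbi
    have hΛc : ∀ t ≥ t₀, HasDerivWithinAt (fun t => Λ t i)
        ((1/t) * (b t i - Λ t i)) (Set.Ici t₀) t := by
      intro t ht
      have h := (ContinuousLinearMap.proj (R := ℝ) (φ := fun _ : Fin 2 => ℝ)
        i).hasFDerivAt.comp_hasDerivWithinAt t (hΛ t ht)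
      simpa [Function.comp_def] using h
    have hf : ∀ t ≥ t₀, HasDerivWithinAt (fun t => t * Λ t i - t/2)
        (b t i - 1/2) (Set.Ici t₀) t := by
      intro t ht
      have htne : t ≠ 0 := ne_of_gt (lt_of_lt_of_le ht₀ ht)
      have h1 := ((hasDerivWithinAt_id t (Set.Ici t₀)).mul (hΛc t ht)).sub
        ((hasDerivWithinAt_id t (Set.Ici t₀)).div_const 2)
      convert h1 using 1
      · rfl
      · rfl
      · rfl
      field_simp
      simp only [id]
      ring
    have h0 : Filter.Tendsto (fun t => b t i - 1/2) Filter.atTop (nhds 0) := by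
      simpa using hbi.sub (tendsto_const_nhds (x := (1:ℝ)/2))
    have := slope_tendsto_zero t₀ _ _ hf h0
    have h2 : Filter.Tendsto (fun t => Λ t i - 1/2) Filter.atTop (nhds 0) := by
      apply this.congr'
      filter_upwards [Filter.eventually_ge_atTop (max t₀ 1)] with t ht
      have htpos : (0:ℝ) < t := lt_of_lt_of_le one_pos (le_trans (le_max_right _ _) ht)
      field_simp
    have := h2.add (tendsto_const_nhds (x := (1:ℝ)/2))
    simpa using this
  rw [tendsto_pi_nhds]
  intro i
  fin_cases i
  · simpa using hΛtend 0 hb0t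
  · simpa using hΛtend 1 hb1t
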